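/- Let d ≥ 2 be an integer, let (Ω, 𝔽, μ) be a probability space, let V : Ω → ({0,1}^d → ℝ) be a family of coalitional games such that ω ↦ V(ω)(s) is measurable for each of the 2^d subsets s, and let Φ : Ω → ℝ^d be a measurable estimator satisfying the efficiency constraint 1^⊤Φ(ω) = V(ω)(1) − V(ω)(0) for μ-almost every ω. Define the expected losses L = E_ω[h_{V(ω)}(Φ(ω))] and L* = E_ω[h_{V(ω)}(φ(V(ω)))], assumed finite. Then E_ω[‖Φ(ω) − φ(V(ω))‖₂] ≤ √(2·H_{d−1}·(L − L*)). -/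

import Mathlib

open scoped BigOperators
open MeasureTheory

/-- The `n`-th harmonic number `H_n = ∑_{k=1}^n 1/k`. -/
noncomputable def harm (n : ℕ) : ℝ := ∑ k ∈ Finset.Icc 1 n, (1 : ℝ) / k

/-- Normalizing constant `Q = ∑_{k=1}^{d-1} (d-1)/(k(d-k))` of the Shapley kernel. -/
noncomputable def shapQ (d : ℕ) : ℝ :=
  ∑ k ∈ Finset.Icc 1 (d - 1), ((d : ℝ) - 1) / ((k : ℝ) * ((d : ℝ) - (k : ℝ)))

/-- Shapley kernel distribution on subsets `s ⊆ {1,…,d}`. -/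
noncomputable def pSh (d : ℕ) (s : Finset (Fin d)) : ℝ :=
  if 0 < s.card ∧ s.card < d then
    (((d : ℝ) - 1) /
      ((Nat.choose d s.card : ℝ) * (s.card : ℝ) * ((d : ℝ) - (s.card : ℝ)))) / shapQ d
  else 0

/-- Shapley regression loss `h_v(φ) = E_{s∼p_Sh}[(v(s) - v(0) - sᵀφ)²]`. -/
noncomputable def hLoss (d : ℕ) (v : Finset (Fin d) → ℝ)
    (φ : EuclideanSpace ℝ (Fin d)) : ℝ :=
  ∑ s : Finset (Fin d), pSh d s * (v s - v ∅ - ∑ i ∈ s, φ i) ^ 2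

/-- Shapley values `φ_i(v) = (1/d) ∑_{s : i ∉ s} C(d-1, |s|)⁻¹ (v(s+e_i) - v(s))`. -/
noncomputable def shapleyValue (d : ℕ) (v : Finset (Fin d) → ℝ) :
    EuclideanSpace ℝ (Fin d) :=
  WithLp.toLp 2 fun i => (1 / (d : ℝ)) *
    ∑ s ∈ Finset.univ.filter (fun s : Finset (Fin d) => i ∉ s),
      ((Nat.choose (d - 1) s.card : ℝ))⁻¹ * (v (insert i s) - v s)

namespace ShapAux

open Finset

/-- Shapley kernel weight as a function of the cardinality. -/
noncomputable def pw (d k : ℕ) : ℝ :=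
  if 0 < k ∧ k < d then
    (((d : ℝ) - 1) / ((Nat.choose d k : ℝ) * (k : ℝ) * ((d : ℝ) - (k : ℝ)))) / shapQ d
  else 0

lemma pSh_eq {d : ℕ} (s : Finset (Fin d)) : pSh d s = pw d s.card := rfl

lemma sum_Icc_one (n : ℕ) (f : ℕ → ℝ) :
    ∑ k ∈ Icc 1 n, f k = ∑ k ∈ range n, f (k + 1) := by
  induction n with
  | zero => simp
  | succ n ih =>
    rw [Finset.sum_Icc_succ_top (by omega), ih, Finset.sum_range_succ]

lemma harm_eq_range (n : ℕ) : harm n = ∑ k ∈ range n, (1 : ℝ) / (k + 1) := by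
  rw [harm, sum_Icc_one]
  push_cast
  rfl

lemma harm_succ (n : ℕ) : harm (n + 1) = harm n + 1 / (n + 1) := by
  rw [harm, harm, Finset.sum_Icc_succ_top (by omega)]
  push_cast
  rfl

lemma harm_pos {n : ℕ} (hn : 1 ≤ n) : 0 < harm n := by
  rw [harm_eq_range]
  apply Finset.sum_pos
  · intro k _; positivity
  · exact ⟨0, Finset.mem_range.mpr hn⟩

lemma reflect_harm (n : ℕ) : ∑ k ∈ range n, (1 : ℝ) / ((n : ℝ) - k) = harm n := by
  rw [harm_eq_range, ← Finset.sum_range_reflect (fun j => (1 : ℝ) / (j + 1)) n]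
  refine Finset.sum_congr rfl fun k hk => ?_
  rw [Finset.mem_range] at hk
  have h1 : (n - 1 - k : ℕ) = n - (k + 1) := by omega
  have h2 : ((n - (k + 1) : ℕ) : ℝ) = (n : ℝ) - (k + 1) := by
    have : k + 1 ≤ n := hk
    push_cast [Nat.cast_sub this]
    ring
  rw [h1, h2]
  ring_nf

lemma shapQ_eq {d : ℕ} (hd : 2 ≤ d) :
    shapQ d = 2 * harm (d - 1) * ((d : ℝ) - 1) / d := by
  have hd0 : (0 : ℝ) < d := by positivity
  have hcast : ((d - 1 : ℕ) : ℝ) = (d : ℝ) - 1 := by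
    push_cast [Nat.cast_sub (by omega : 1 ≤ d)]; ring
  rw [shapQ, sum_Icc_one]
  have hterm : ∀ k ∈ range (d - 1),
      ((d : ℝ) - 1) / ((k + 1 : ℕ) * ((d : ℝ) - (k + 1 : ℕ))) =
        ((d : ℝ) - 1) / d * ((1 : ℝ) / (k + 1)) +
          ((d : ℝ) - 1) / d * ((1 : ℝ) / (((d - 1 : ℕ) : ℝ) - k)) := by
    intro k hk
    rw [Finset.mem_range] at hk
    have h1 : (0 : ℝ) < (k : ℝ) + 1 := by positivity
    have h2 : (0 : ℝ) < (d : ℝ) - (k + 1) := by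
      have : (k : ℝ) + 1 < d := by
        have : (k : ℕ) + 1 < d := by omega
        exact_mod_cast this
      linarith
    rw [hcast]
    have h2' : ((d : ℝ)) - ((k : ℝ) + 1) ≠ 0 := ne_of_gt h2
    have hd' : (d : ℝ) ≠ 0 := ne_of_gt hd0
    have h1' : ((k : ℝ) + 1) ≠ 0 := ne_of_gt h1
    push_cast
    rw [show (d : ℝ) - 1 - (k : ℝ) = (d : ℝ) - ((k : ℝ) + 1) by ring]
    field_simp
    ring
  rw [Finset.sum_congr rfl hterm, Finset.sum_add_distrib, ← Finset.mul_sum, ← Finset.mul_sum,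
    reflect_harm, ← harm_eq_range]
  ring

/-- `d * C(d-1,k) = C(d,k+1) * (k+1)` over `ℝ`. -/
lemma choose_id1 {d : ℕ} (hd : 1 ≤ d) (k : ℕ) :
    (d : ℝ) * (Nat.choose (d - 1) k : ℝ) = (Nat.choose d (k + 1) : ℝ) * (k + 1) := by
  have h := Nat.add_one_mul_choose_eq (d - 1) k
  have hsd : d - 1 + 1 = d := by omega
  rw [hsd] at h
  exact_mod_cast h

/-- `d * C(d-1,k) = C(d,k) * (d-k)` over `ℝ`, for `k ≤ d`. -/
lemma choose_id2 {d : ℕ} (hd : 1 ≤ d) {k : ℕ} (hk : k ≤ d) :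
    (d : ℝ) * (Nat.choose (d - 1) k : ℝ) = (Nat.choose d k : ℝ) * ((d : ℝ) - k) := by
  have h1 := Nat.choose_succ_right_eq d k
  have h2 := choose_id1 hd k
  have h1' : ((Nat.choose d (k + 1) : ℝ)) * (k + 1) = (Nat.choose d k : ℝ) * ((d : ℝ) - k) := by
    have := congrArg (fun n : ℕ => (n : ℝ)) h1
    simp only [Nat.cast_mul] at this
    rw [Nat.cast_sub hk] at this
    push_cast at this ⊢
    linarith
  rw [h2, h1']


variable {d : ℕ}

lemma shapQ_pos (hd : 2 ≤ d) : 0 < shapQ d := by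
  rw [shapQ_eq hd]
  have h1 : 0 < harm (d - 1) := harm_pos (by omega)
  have h2 : (0 : ℝ) < (d : ℝ) - 1 := by
    have : (1 : ℝ) < (d : ℝ) := by exact_mod_cast (by omega : 1 < d)
    linarith
  have h3 : (0 : ℝ) < (d : ℝ) := by positivity
  positivity

lemma pw_top (k : ℕ) (hk : d ≤ k) : pw d k = 0 := by
  rw [pw, if_neg]
  rintro ⟨-, h⟩; omega

lemma sum_mem_card (i : Fin d) (g : ℕ → ℝ) :
    ∑ s : Finset (Fin d), (if i ∈ s then g s.card else 0) =
      ∑ k ∈ range d, (Nat.choose (d - 1) k : ℝ) * g (k + 1) := by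
  classical
  rw [← Finset.sum_filter]
  have hbij : ∑ s ∈ univ.filter (fun s : Finset (Fin d) => i ∈ s), g s.card =
      ∑ t ∈ (univ.erase i).powerset, g (t.card + 1) := by
    refine Finset.sum_bij' (fun s _ => s.erase i) (fun t _ => insert i t) ?_ ?_ ?_ ?_ ?_
    · intro s hs
      rw [Finset.mem_powerset]
      exact Finset.erase_subset_erase i (Finset.subset_univ s)
    · intro t ht
      simp only [Finset.mem_filter, Finset.mem_univ, true_and]
      exact Finset.mem_insert_self i t
    · intro s hs
      rw [Finset.mem_filter] at hs
      exact Finset.insert_erase hs.2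
    · intro t ht
      rw [Finset.mem_powerset] at ht
      refine Finset.erase_insert fun hit => ?_
      exact (Finset.mem_erase.mp (ht hit)).1 rfl
    · intro s hs
      rw [Finset.mem_filter] at hs
      rw [Finset.card_erase_add_one hs.2]
  rw [hbij, Finset.sum_powerset_apply_card (fun m => g (m + 1))]
  have hd0 : 0 < d := i.pos
  have hcard : (univ.erase i).card = d - 1 := by
    rw [Finset.card_erase_of_mem (Finset.mem_univ i), Finset.card_univ, Fintype.card_fin]
  have hd1 : d - 1 + 1 = d := by omega
  rw [hcard, hd1]
  refine Finset.sum_congr rfl fun k _ => ?_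
  rw [nsmul_eq_mul]

lemma sum_mem2_card (hd : 2 ≤ d) {i j : Fin d} (hij : i ≠ j) (g : ℕ → ℝ) :
    ∑ s : Finset (Fin d), (if i ∈ s ∧ j ∈ s then g s.card else 0) =
      ∑ k ∈ range (d - 1), (Nat.choose (d - 2) k : ℝ) * g (k + 2) := by
  classical
  rw [← Finset.sum_filter]
  have hbij : ∑ s ∈ univ.filter (fun s : Finset (Fin d) => i ∈ s ∧ j ∈ s), g s.card =
      ∑ t ∈ ((univ.erase i).erase j).powerset, g (t.card + 2) := by
    refine Finset.sum_bij' (fun s _ => (s.erase i).erase j) (fun t _ => insert i (insert j t))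
      ?_ ?_ ?_ ?_ ?_
    · intro s hs
      rw [Finset.mem_powerset]
      exact Finset.erase_subset_erase j (Finset.erase_subset_erase i (Finset.subset_univ s))
    · intro t ht
      rw [Finset.mem_powerset] at ht
      simp only [Finset.mem_filter, Finset.mem_univ, true_and]
      refine ⟨Finset.mem_insert_self i _, Finset.mem_insert_of_mem (Finset.mem_insert_self j t)⟩
    · intro s hs
      rw [Finset.mem_filter] at hs
      have hj' : j ∈ s.erase i := Finset.mem_erase.mpr ⟨hij.symm, hs.2.2⟩
      show insert i (insert j ((s.erase i).erase j)) = s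
      rw [Finset.insert_erase hj', Finset.insert_erase hs.2.1]
    · intro t ht
      rw [Finset.mem_powerset] at ht
      have hjt : j ∉ t := fun h => (Finset.mem_erase.mp (ht h)).1 rfl
      have hit : i ∉ t := fun h => (Finset.mem_erase.mp ((Finset.erase_subset _ _) (ht h))).1 rfl
      have hi' : i ∉ insert j t := by
        simp only [Finset.mem_insert]
        rintro (h | h)
        · exact hij h
        · exact hit h
      show ((insert i (insert j t)).erase i).erase j = t
      rw [Finset.erase_insert hi', Finset.erase_insert hjt]
    · intro s hs
      rw [Finset.mem_filter] at hs
      have hj' : j ∈ s.erase i := Finset.mem_erase.mpr ⟨hij.symm, hs.2.2⟩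
      show g s.card = g (((s.erase i).erase j).card + 2)
      have h1 : (s.erase i).card + 1 = s.card := Finset.card_erase_add_one hs.2.1
      have h2 : ((s.erase i).erase j).card + 1 = (s.erase i).card :=
        Finset.card_erase_add_one hj'
      have h3 : s.card = ((s.erase i).erase j).card + 2 := by omega
      rw [h3]
  rw [hbij, Finset.sum_powerset_apply_card (fun m => g (m + 2))]
  have hcard : ((univ.erase i).erase j).card = d - 2 := by
    have hj'' : j ∈ univ.erase i := Finset.mem_erase.mpr ⟨hij.symm, Finset.mem_univ j⟩
    rw [Finset.card_erase_of_mem hj'', Finset.card_erase_of_mem (Finset.mem_univ i),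
      Finset.card_univ, Fintype.card_fin]
    omega
  have hd1 : d - 2 + 1 = d - 1 := by omega
  rw [hcard, hd1]
  refine Finset.sum_congr rfl fun k _ => ?_
  rw [nsmul_eq_mul]


lemma cast_pred (hd : 1 ≤ d) : ((d - 1 : ℕ) : ℝ) = (d : ℝ) - 1 := by
  push_cast [Nat.cast_sub hd]; ring

/-- `∑_{s ∋ i} p_Sh(s) = 1/2`. -/
lemma alpha_sum (hd : 2 ≤ d) (i : Fin d) :
    ∑ s : Finset (Fin d), (if i ∈ s then pSh d s else 0) = 1 / 2 := by
  have hD : (0 : ℝ) < d := by positivity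
  have hD1 : (0 : ℝ) < (d : ℝ) - 1 := by
    have : (1 : ℝ) < (d : ℝ) := by exact_mod_cast (by omega : 1 < d)
    linarith
  have hQ : 0 < shapQ d := shapQ_pos hd
  have hH : 0 < harm (d - 1) := harm_pos (by omega)
  simp only [pSh_eq]
  rw [sum_mem_card i (pw d)]
  rw [← Finset.sum_subset (Finset.range_subset_range.mpr (by omega : d - 1 ≤ d))
    (fun k hk hk' => ?_)]
  · have hterm : ∀ k ∈ range (d - 1),
        (Nat.choose (d - 1) k : ℝ) * pw d (k + 1) =
          ((d : ℝ) - 1) / ((d : ℝ) * shapQ d) * (1 / (((d - 1 : ℕ) : ℝ) - k)) := by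
      intro k hk
      rw [Finset.mem_range] at hk
      have hk1 : (0 : ℝ) < (k : ℝ) + 1 := by positivity
      have hk2 : (0 : ℝ) < (d : ℝ) - ((k : ℝ) + 1) := by
        have : ((k : ℕ) + 1 : ℝ) < d := by exact_mod_cast (by omega : k + 1 < d)
        push_cast at this; linarith
      have hc1 : (0 : ℝ) < (Nat.choose d (k + 1) : ℝ) := by
        exact_mod_cast Nat.choose_pos (by omega : k + 1 ≤ d)
      have hid := choose_id1 (by omega : 1 ≤ d) k
      have hc2 : (Nat.choose (d - 1) k : ℝ) = (Nat.choose d (k + 1) : ℝ) * ((k : ℝ) + 1) / d :=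
        by field_simp; linarith [hid]
      rw [pw, if_pos ⟨by omega, by omega⟩, hc2, cast_pred (by omega)]
      push_cast
      rw [show (d : ℝ) - 1 - (k : ℝ) = (d : ℝ) - ((k : ℝ) + 1) by ring]
      field_simp
    rw [Finset.sum_congr rfl hterm, ← Finset.mul_sum, reflect_harm (d - 1),
      shapQ_eq hd]
    field_simp
  · have : k = d - 1 := by
      rw [Finset.mem_range] at hk hk'
      omega
    subst this
    have : d - 1 + 1 = d := by omega
    rw [this, pw_top d le_rfl, mul_zero]

/-- `∑_{s ∋ i, j} p_Sh(s) = 1/2 - 1/(2 H_{d-1})` for `i ≠ j`. -/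
lemma beta_sum (hd : 2 ≤ d) {i j : Fin d} (hij : i ≠ j) :
    ∑ s : Finset (Fin d), (if i ∈ s ∧ j ∈ s then pSh d s else 0) =
      1 / 2 - 1 / (2 * harm (d - 1)) := by
  have hD : (0 : ℝ) < d := by positivity
  have hD1 : (0 : ℝ) < (d : ℝ) - 1 := by
    have : (1 : ℝ) < (d : ℝ) := by exact_mod_cast (by omega : 1 < d)
    linarith
  have hQ : 0 < shapQ d := shapQ_pos hd
  have hH : 0 < harm (d - 1) := harm_pos (by omega)
  simp only [pSh_eq]
  rw [sum_mem2_card hd hij (pw d)]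
  rw [← Finset.sum_subset (Finset.range_subset_range.mpr (by omega : d - 2 ≤ d - 1))
    (fun k hk hk' => ?_)]
  · have hterm : ∀ k ∈ range (d - 2),
        (Nat.choose (d - 2) k : ℝ) * pw d (k + 2) =
          1 / ((d : ℝ) * shapQ d) * (((k : ℝ) + 1) / (((d - 2 : ℕ) : ℝ) - k)) := by
      intro k hk
      rw [Finset.mem_range] at hk
      have hk2 : (0 : ℝ) < (d : ℝ) - ((k : ℝ) + 2) := by
        have : ((k : ℕ) + 2 : ℝ) < d := by exact_mod_cast (by omega : k + 2 < d)
        push_cast at this; linarith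
      have hc1 : (0 : ℝ) < (Nat.choose d (k + 2) : ℝ) := by
        exact_mod_cast Nat.choose_pos (by omega : k + 2 ≤ d)
      -- d * C(d-1, k+1) = C(d, k+2) * (k+2)
      have hidA := choose_id1 (by omega : 1 ≤ d) (k + 1)
      -- (d-1) * C(d-2, k) = C(d-1, k+1) * (k+1)
      have hidB := choose_id1 (d := d - 1) (by omega : 1 ≤ d - 1) k
      rw [show d - 1 - 1 = d - 2 by omega, cast_pred (by omega : 1 ≤ d)] at hidB
      have hc3 : (0 : ℝ) < (Nat.choose (d - 1) (k + 1) : ℝ) := by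
        exact_mod_cast Nat.choose_pos (by omega : k + 1 ≤ d - 1)
      have hc2cast : ((d - 2 : ℕ) : ℝ) = (d : ℝ) - 2 := by
        push_cast [Nat.cast_sub (by omega : 2 ≤ d)]; ring
      rw [pw, if_pos ⟨by omega, by omega⟩, hc2cast]
      push_cast
      have hexp : (Nat.choose d (k + 2) : ℝ) =
          (d : ℝ) * ((d : ℝ) - 1) * (Nat.choose (d - 2) k : ℝ)
            / (((k : ℝ) + 1) * ((k : ℝ) + 2)) := by
        push_cast at hidA hidB
        field_simp
        nlinarith [hidA, hidB]
      rw [hexp]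
      rw [show (d : ℝ) - 2 - (k : ℝ) = (d : ℝ) - ((k : ℝ) + 2) by ring]
      have hc20 : (0 : ℝ) < (Nat.choose (d - 2) k : ℝ) := by
        exact_mod_cast Nat.choose_pos (by omega : k ≤ d - 2)
      field_simp
    rw [Finset.sum_congr rfl hterm, ← Finset.mul_sum]
    -- ∑_{k < d-2} (k+1)/((d-2) - k) = (d-1) * harm (d-1) - (d-1)
    have hrefl : ∑ k ∈ range (d - 2), ((k : ℝ) + 1) / (((d - 2 : ℕ) : ℝ) - k) =
        ((d : ℝ) - 1) * harm (d - 1) - ((d : ℝ) - 1) := by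
      set m := d - 2 with hm
      have : ∑ k ∈ range m, ((k : ℝ) + 1) / (((m : ℕ) : ℝ) - k) =
          ∑ k ∈ range m, (((m : ℝ) - k) / ((k : ℝ) + 1)) := by
        rw [← Finset.sum_range_reflect (fun k => ((m : ℝ) - k) / ((k : ℝ) + 1)) m]
        refine Finset.sum_congr rfl fun k hk => ?_
        rw [Finset.mem_range] at hk
        have h1 : (m - 1 - k : ℕ) = m - (k + 1) := by omega
        have h2 : ((m - (k + 1) : ℕ) : ℝ) = (m : ℝ) - (k + 1) := by
          push_cast [Nat.cast_sub (by omega : k + 1 ≤ m)]; ring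
        rw [h1, h2]
        ring_nf
      rw [this]
      have : ∑ k ∈ range m, (((m : ℝ) - k) / ((k : ℝ) + 1)) =
          ∑ k ∈ range m, (((m : ℝ) + 1) * (1 / ((k : ℝ) + 1)) - 1) := by
        refine Finset.sum_congr rfl fun k hk => ?_
        have : (0 : ℝ) < (k : ℝ) + 1 := by positivity
        field_simp
        try ring
      rw [this, Finset.sum_sub_distrib, ← Finset.mul_sum, ← harm_eq_range,
        Finset.sum_const, Finset.card_range, nsmul_eq_mul, mul_one]
      -- harm (d-1) = harm (d-2) + 1/(d-1)
      have hms : m + 1 = d - 1 := by omega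
      have hsucc : harm (d - 1) = harm m + 1 / ((m : ℝ) + 1) := by
        rw [← hms, harm_succ]
      have hm1 : ((m : ℝ) + 1) = (d : ℝ) - 1 := by
        have h := congrArg (fun n : ℕ => (n : ℝ)) hms
        simp only [Nat.cast_add, Nat.cast_one] at h
        rw [cast_pred (by omega : 1 ≤ d)] at h
        linarith
      have hmm : (m : ℝ) = (d : ℝ) - 2 := by linarith
      rw [hsucc]
      rw [hm1, hmm]
      have : (d : ℝ) - 1 ≠ 0 := by linarith
      field_simp
      ring
    rw [hrefl, shapQ_eq hd]
    have hH' : harm (d - 1) ≠ 0 := ne_of_gt hH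
    field_simp
  · have : k = d - 2 := by
      rw [Finset.mem_range] at hk hk'
      omega
    subst this
    have h2 : d - 2 + 2 = d := by omega
    rw [h2, pw_top d le_rfl, mul_zero]


lemma sum_insert_eq (i : Fin d) (g : Finset (Fin d) → ℝ) :
    ∑ s ∈ univ.filter (fun s : Finset (Fin d) => i ∉ s), g (insert i s) =
      ∑ s : Finset (Fin d), (if i ∈ s then g s else 0) := by
  classical
  rw [← Finset.sum_filter]
  refine Finset.sum_bij' (fun s _ => insert i s) (fun t _ => t.erase i) ?_ ?_ ?_ ?_ ?_
  · intro s hs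
    rw [Finset.mem_filter] at hs ⊢
    exact ⟨Finset.mem_univ _, Finset.mem_insert_self i s⟩
  · intro t ht
    rw [Finset.mem_filter]
    exact ⟨Finset.mem_univ _, Finset.notMem_erase i t⟩
  · intro s hs
    rw [Finset.mem_filter] at hs
    exact Finset.erase_insert hs.2
  · intro t ht
    rw [Finset.mem_filter] at ht
    exact Finset.insert_erase ht.2
  · intro s hs
    rfl

lemma shapley_repr (v : Finset (Fin d) → ℝ) (i : Fin d) :
    shapleyValue d v i = (1 / (d : ℝ)) *
      ((∑ s : Finset (Fin d),
          (if i ∈ s then ((Nat.choose (d - 1) (s.card - 1) : ℝ))⁻¹ * v s else 0)) -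
        ∑ s : Finset (Fin d),
          (if i ∉ s then ((Nat.choose (d - 1) s.card : ℝ))⁻¹ * v s else 0)) := by
  rw [shapleyValue]
  show (1 / (d : ℝ)) * _ = _
  congr 1
  rw [← Finset.sum_sub_distrib]
  have h1 : ∀ s ∈ univ.filter (fun s : Finset (Fin d) => i ∉ s),
      ((Nat.choose (d - 1) s.card : ℝ))⁻¹ * (v (insert i s) - v s) =
        ((Nat.choose (d - 1) ((insert i s).card - 1) : ℝ))⁻¹ * v (insert i s) -
          ((Nat.choose (d - 1) s.card : ℝ))⁻¹ * v s := by
    intro s hs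
    rw [Finset.mem_filter] at hs
    rw [Finset.card_insert_of_notMem hs.2, Nat.add_sub_cancel]
    ring
  rw [Finset.sum_congr rfl h1, Finset.sum_sub_distrib,
    sum_insert_eq i (fun t => ((Nat.choose (d - 1) (t.card - 1) : ℝ))⁻¹ * v t),
    Finset.sum_filter, Finset.sum_sub_distrib]

/-- The `i`-independent part in the representation of `∑_{s∋i} p_Sh(s) v(s)`. -/
noncomputable def Gv (d : ℕ) (v : Finset (Fin d) → ℝ) : ℝ :=
  ∑ s : Finset (Fin d),
    (if s = Finset.univ then -(1 / (d : ℝ))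
      else (1 / (d : ℝ)) * ((Nat.choose (d - 1) s.card : ℝ))⁻¹) * v s

/-- Key numeric identity `2 H p_k = (1/d)(C(d-1,k-1)⁻¹ + C(d-1,k)⁻¹)`. -/
lemma KNI (hd : 2 ≤ d) {k : ℕ} (h1 : 1 ≤ k) (h2 : k ≤ d - 1) :
    2 * harm (d - 1) * pw d k =
      (1 / (d : ℝ)) * ((Nat.choose (d - 1) (k - 1) : ℝ))⁻¹ +
        (1 / (d : ℝ)) * ((Nat.choose (d - 1) k : ℝ))⁻¹ := by
  have hD : (0 : ℝ) < d := by positivity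
  have hD1 : (0 : ℝ) < (d : ℝ) - 1 := by
    have : (1 : ℝ) < (d : ℝ) := by exact_mod_cast (by omega : 1 < d)
    linarith
  have hH : 0 < harm (d - 1) := harm_pos (by omega)
  have hk0 : (0 : ℝ) < (k : ℝ) := by exact_mod_cast (by omega : 0 < k)
  have hdk : (0 : ℝ) < (d : ℝ) - (k : ℝ) := by
    have : (k : ℝ) < (d : ℝ) := by exact_mod_cast (by omega : k < d)
    linarith
  have hc1 : (0 : ℝ) < (Nat.choose d k : ℝ) := by
    exact_mod_cast Nat.choose_pos (by omega : k ≤ d)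
  have hc2 : (0 : ℝ) < (Nat.choose (d - 1) (k - 1) : ℝ) := by
    exact_mod_cast Nat.choose_pos (by omega : k - 1 ≤ d - 1)
  have hc3 : (0 : ℝ) < (Nat.choose (d - 1) k : ℝ) := by
    exact_mod_cast Nat.choose_pos (by omega : k ≤ d - 1)
  -- D * C(d-1,k-1) = C(d,k) * k
  have e2 : (d : ℝ) * (Nat.choose (d - 1) (k - 1) : ℝ) = (Nat.choose d k : ℝ) * k := by
    have := choose_id1 (by omega : 1 ≤ d) (k - 1)
    rw [show k - 1 + 1 = k by omega] at this
    rw [this]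
    have : ((k - 1 : ℕ) : ℝ) = (k : ℝ) - 1 := by
      push_cast [Nat.cast_sub (by omega : 1 ≤ k)]; ring
    rw [this]; ring
  -- D * C(d-1,k) = C(d,k) * (D - k)
  have e3 : (d : ℝ) * (Nat.choose (d - 1) k : ℝ) = (Nat.choose d k : ℝ) * ((d : ℝ) - k) :=
    choose_id2 (by omega) (by omega : k ≤ d)
  have hc2' : ((Nat.choose (d - 1) (k - 1) : ℝ)) = (Nat.choose d k : ℝ) * k / d := by
    field_simp; linarith
  have hc3' : ((Nat.choose (d - 1) k : ℝ)) = (Nat.choose d k : ℝ) * ((d : ℝ) - k) / d := by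
    field_simp; linarith
  rw [pw, if_pos ⟨by omega, by omega⟩, shapQ_eq hd, hc2', hc3']
  field_simp
  ring

/-- Representation lemma: `2 H ∑_{s∋i} p_Sh(s) v(s) = φ*_i + G(v)`. -/
lemma lemC (hd : 2 ≤ d) (v : Finset (Fin d) → ℝ) (i : Fin d) :
    2 * harm (d - 1) * (∑ s : Finset (Fin d), (if i ∈ s then pSh d s else 0) * v s) =
      shapleyValue d v i + Gv d v := by
  rw [shapley_repr, Gv, Finset.mul_sum, mul_sub, Finset.mul_sum, Finset.mul_sum,
    ← Finset.sum_sub_distrib, ← Finset.sum_add_distrib]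
  refine Finset.sum_congr rfl fun s _ => ?_
  by_cases hsu : s = Finset.univ
  · subst hsu
    have hcard : (Finset.univ : Finset (Fin d)).card = d := by
      rw [Finset.card_univ, Fintype.card_fin]
    rw [if_pos (Finset.mem_univ i), if_pos (Finset.mem_univ i),
      if_neg (by simp : ¬ i ∉ (Finset.univ : Finset (Fin d))), if_pos rfl]
    rw [pSh_eq, hcard, pw_top d le_rfl]
    rw [show d - 1 = d - 1 by rfl]
    have : (Nat.choose (d - 1) (d - 1) : ℝ) = 1 := by
      rw [Nat.choose_self]; norm_num
    rw [this]
    ring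
  · by_cases his : i ∈ s
    · rw [if_pos his, if_pos his, if_neg (by simp [his]), if_neg hsu]
      have h1 : 1 ≤ s.card := Finset.card_pos.mpr ⟨i, his⟩
      have h2 : s.card ≤ d - 1 := by
        have := Finset.card_lt_card (Finset.ssubset_univ_iff.mpr hsu)
        rw [Finset.card_univ, Fintype.card_fin] at this
        omega
      rw [pSh_eq, ← mul_assoc]
      rw [KNI hd h1 h2]
      ring
    · rw [if_neg his, if_neg his, if_pos his, if_neg hsu]
      ring

lemma swap_mem (a : Finset (Fin d) → ℝ) :
    ∑ i : Fin d, ∑ s : Finset (Fin d), (if i ∈ s then a s else 0) =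
      ∑ s : Finset (Fin d), (s.card : ℝ) * a s := by
  rw [Finset.sum_comm]
  refine Finset.sum_congr rfl fun s _ => ?_
  rw [Finset.sum_ite_mem, Finset.univ_inter, Finset.sum_const, nsmul_eq_mul]

lemma swap_notmem (a : Finset (Fin d) → ℝ) :
    ∑ i : Fin d, ∑ s : Finset (Fin d), (if i ∉ s then a s else 0) =
      ∑ s : Finset (Fin d), ((d : ℝ) - s.card) * a s := by
  rw [Finset.sum_comm]
  refine Finset.sum_congr rfl fun s _ => ?_
  have h1 : ∀ i : Fin d, (if i ∉ s then a s else 0) = (if i ∈ sᶜ then a s else 0) := by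
    intro i
    simp [Finset.mem_compl]
  rw [Finset.sum_congr rfl fun i _ => h1 i, Finset.sum_ite_mem, Finset.univ_inter,
    Finset.sum_const, nsmul_eq_mul, Finset.card_compl, Fintype.card_fin]
  have : ((d - s.card : ℕ) : ℝ) = (d : ℝ) - s.card := by
    have hle : s.card ≤ d := by
      have := Finset.card_le_univ s
      simpa using this
    push_cast [Nat.cast_sub hle]; ring
  rw [this]

/-- Efficiency of the Shapley value. -/
lemma shapley_eff (hd : 2 ≤ d) (v : Finset (Fin d) → ℝ) :
    ∑ i : Fin d, shapleyValue d v i = v Finset.univ - v ∅ := by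
  have hD : (0 : ℝ) < d := by positivity
  have hrepr : ∀ i : Fin d, shapleyValue d v i = (1 / (d : ℝ)) *
      ((∑ s : Finset (Fin d),
          (if i ∈ s then ((Nat.choose (d - 1) (s.card - 1) : ℝ))⁻¹ * v s else 0)) -
        ∑ s : Finset (Fin d),
          (if i ∉ s then ((Nat.choose (d - 1) s.card : ℝ))⁻¹ * v s else 0)) :=
    fun i => shapley_repr v i
  rw [Finset.sum_congr rfl fun i _ => hrepr i, ← Finset.mul_sum, Finset.sum_sub_distrib,
    swap_mem (fun s => ((Nat.choose (d - 1) (s.card - 1) : ℝ))⁻¹ * v s),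
    swap_notmem (fun s => ((Nat.choose (d - 1) s.card : ℝ))⁻¹ * v s)]
  have hterm : ∀ s : Finset (Fin d),
      (s.card : ℝ) * (((Nat.choose (d - 1) (s.card - 1) : ℝ))⁻¹ * v s) -
        ((d : ℝ) - s.card) * (((Nat.choose (d - 1) s.card : ℝ))⁻¹ * v s) =
      (if s = Finset.univ then (d : ℝ) * v s else 0) +
        (if s = (∅ : Finset (Fin d)) then -((d : ℝ) * v s) else 0) := by
    intro s
    by_cases hsu : s = Finset.univ
    · subst hsu
      have hcard : (Finset.univ : Finset (Fin d)).card = d := by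
        rw [Finset.card_univ, Fintype.card_fin]
      rw [if_pos rfl, if_neg (fun h =>
        Finset.eq_empty_iff_forall_notMem.mp h ⟨0, by omega⟩ (Finset.mem_univ _))]
      rw [hcard, Nat.choose_self]
      norm_num
    · by_cases hse : s = (∅ : Finset (Fin d))
      · subst hse
        rw [if_neg hsu, if_pos rfl]
        simp [Nat.choose_zero_right]
      · rw [if_neg hsu, if_neg hse]
        have h1 : 1 ≤ s.card := Finset.card_pos.mpr (Finset.nonempty_of_ne_empty hse)
        have h2 : s.card ≤ d - 1 := by
          have := Finset.card_lt_card (Finset.ssubset_univ_iff.mpr hsu)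
          rw [Finset.card_univ, Fintype.card_fin] at this
          omega
        set k := s.card with hk
        have hc1 : (0 : ℝ) < (Nat.choose d k : ℝ) := by
          exact_mod_cast Nat.choose_pos (by omega : k ≤ d)
        have hc2 : (0 : ℝ) < (Nat.choose (d - 1) (k - 1) : ℝ) := by
          exact_mod_cast Nat.choose_pos (by omega : k - 1 ≤ d - 1)
        have hc3 : (0 : ℝ) < (Nat.choose (d - 1) k : ℝ) := by
          exact_mod_cast Nat.choose_pos (by omega : k ≤ d - 1)
        have e2 : (d : ℝ) * (Nat.choose (d - 1) (k - 1) : ℝ) = (Nat.choose d k : ℝ) * k := by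
          have := choose_id1 (by omega : 1 ≤ d) (k - 1)
          rw [show k - 1 + 1 = k by omega] at this
          rw [this]
          have : ((k - 1 : ℕ) : ℝ) = (k : ℝ) - 1 := by
            push_cast [Nat.cast_sub (by omega : 1 ≤ k)]; ring
          rw [this]; ring
        have e3 : (d : ℝ) * (Nat.choose (d - 1) k : ℝ) =
            (Nat.choose d k : ℝ) * ((d : ℝ) - k) :=
          choose_id2 (by omega) (by omega : k ≤ d)
        have hc2' : ((Nat.choose (d - 1) (k - 1) : ℝ)) = (Nat.choose d k : ℝ) * k / d := by
          field_simp; linarith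
        have hc3' : ((Nat.choose (d - 1) k : ℝ)) =
            (Nat.choose d k : ℝ) * ((d : ℝ) - k) / d := by
          field_simp; linarith
        have hk0 : (0 : ℝ) < (k : ℝ) := by exact_mod_cast (by omega : 0 < k)
        have hdk : (0 : ℝ) < (d : ℝ) - (k : ℝ) := by
          have : (k : ℝ) < (d : ℝ) := by exact_mod_cast (by omega : k < d)
          linarith
        rw [hc2', hc3']
        field_simp
        ring
  rw [← Finset.sum_sub_distrib, Finset.sum_congr rfl fun s _ => hterm s,
    Finset.sum_add_distrib,
    Fintype.sum_ite_eq' Finset.univ (fun s : Finset (Fin d) => (d : ℝ) * v s),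
    Fintype.sum_ite_eq' (∅ : Finset (Fin d)) (fun s : Finset (Fin d) => -((d : ℝ) * v s))]
  field_simp
  ring


lemma pair_sum (hd : 2 ≤ d) (i j : Fin d) :
    ∑ s : Finset (Fin d), (if i ∈ s ∧ j ∈ s then pSh d s else 0) =
      (1 / 2 - 1 / (2 * harm (d - 1))) +
        (if i = j then 1 / (2 * harm (d - 1)) else 0) := by
  by_cases hij : i = j
  · subst hij
    rw [if_pos rfl]
    have h1 : ∀ s : Finset (Fin d),
        (if i ∈ s ∧ i ∈ s then pSh d s else 0) = (if i ∈ s then pSh d s else 0) := by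
      intro s; by_cases h : i ∈ s <;> simp [h]
    rw [Finset.sum_congr rfl fun s _ => h1 s, alpha_sum hd i]
    ring
  · rw [if_neg hij, beta_sum hd hij]
    ring

lemma quad (hd : 2 ≤ d) (δ : Fin d → ℝ) (hδ : ∑ i, δ i = 0) :
    ∑ s : Finset (Fin d), pSh d s * (∑ i ∈ s, δ i) ^ 2 =
      (∑ i, δ i ^ 2) / (2 * harm (d - 1)) := by
  have hexp : ∀ s : Finset (Fin d), pSh d s * (∑ i ∈ s, δ i) ^ 2 =
      ∑ i : Fin d, ∑ j : Fin d, (if i ∈ s ∧ j ∈ s then pSh d s else 0) * (δ i * δ j) := by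
    intro s
    have h1 : (∑ i ∈ s, δ i) = ∑ i : Fin d, (if i ∈ s then δ i else 0) := by
      rw [Finset.sum_ite_mem, Finset.univ_inter]
    rw [h1, sq, Finset.sum_mul_sum, Finset.mul_sum]
    refine Finset.sum_congr rfl fun i _ => ?_
    rw [Finset.mul_sum]
    refine Finset.sum_congr rfl fun j _ => ?_
    by_cases hi : i ∈ s <;> by_cases hj : j ∈ s <;> simp [hi, hj]
  have hswap : ∀ i : Fin d,
      (∑ s : Finset (Fin d), ∑ j : Fin d, (if i ∈ s ∧ j ∈ s then pSh d s else 0) * (δ i * δ j)) =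
        ∑ j : Fin d, ∑ s : Finset (Fin d), (if i ∈ s ∧ j ∈ s then pSh d s else 0) * (δ i * δ j) :=
    fun i => Finset.sum_comm
  rw [Finset.sum_congr rfl fun s _ => hexp s, Finset.sum_comm,
    Finset.sum_congr rfl fun i _ => hswap i]
  have h2 : ∀ i j : Fin d,
      ∑ s : Finset (Fin d), (if i ∈ s ∧ j ∈ s then pSh d s else 0) * (δ i * δ j) =
        ((1 / 2 - 1 / (2 * harm (d - 1))) +
          (if i = j then 1 / (2 * harm (d - 1)) else 0)) * (δ i * δ j) := by
    intro i j
    rw [← Finset.sum_mul, pair_sum hd i j]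
  rw [Finset.sum_congr rfl fun i _ => Finset.sum_congr rfl fun j _ => h2 i j]
  have h3 : ∀ i j : Fin d,
      ((1 / 2 - 1 / (2 * harm (d - 1))) +
          (if i = j then 1 / (2 * harm (d - 1)) else 0)) * (δ i * δ j) =
        (1 / 2 - 1 / (2 * harm (d - 1))) * (δ i * δ j) +
          (if i = j then 1 / (2 * harm (d - 1)) * (δ i * δ j) else 0) := by
    intro i j
    by_cases h : i = j <;> simp [h] <;> ring
  rw [Finset.sum_congr rfl fun i _ => Finset.sum_congr rfl fun j _ => h3 i j]
  have h4 : ∀ i : Fin d,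
      ∑ j : Fin d, ((1 / 2 - 1 / (2 * harm (d - 1))) * (δ i * δ j) +
          (if i = j then 1 / (2 * harm (d - 1)) * (δ i * δ j) else 0)) =
        1 / (2 * harm (d - 1)) * δ i ^ 2 := by
    intro i
    rw [Finset.sum_add_distrib]
    have ha : ∑ j : Fin d, (1 / 2 - 1 / (2 * harm (d - 1))) * (δ i * δ j) =
        (1 / 2 - 1 / (2 * harm (d - 1))) * δ i * (∑ j, δ j) := by
      rw [Finset.mul_sum]
      refine Finset.sum_congr rfl fun j _ => by ring
    have hb : ∑ j : Fin d, (if i = j then 1 / (2 * harm (d - 1)) * (δ i * δ j) else 0) =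
        1 / (2 * harm (d - 1)) * (δ i * δ i) :=
      Fintype.sum_ite_eq i (fun j => 1 / (2 * harm (d - 1)) * (δ i * δ j))
    rw [ha, hb, hδ]
    ring
  rw [Finset.sum_congr rfl fun i _ => h4 i, ← Finset.mul_sum]
  ring

lemma cross (hd : 2 ≤ d) (v : Finset (Fin d) → ℝ) (i : Fin d) :
    ∑ s : Finset (Fin d),
        (if i ∈ s then pSh d s else 0) * (v s - v ∅ - ∑ j ∈ s, shapleyValue d v j) =
      Gv d v / (2 * harm (d - 1)) - v ∅ / 2 -
        (1 / 2 - 1 / (2 * harm (d - 1))) * (v Finset.univ - v ∅) := by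
  have hH : 0 < harm (d - 1) := harm_pos (by omega)
  have hH' : harm (d - 1) ≠ 0 := ne_of_gt hH
  have hsplit : ∀ s : Finset (Fin d),
      (if i ∈ s then pSh d s else 0) * (v s - v ∅ - ∑ j ∈ s, shapleyValue d v j) =
        (if i ∈ s then pSh d s else 0) * v s -
          (if i ∈ s then pSh d s else 0) * v ∅ -
          (if i ∈ s then pSh d s else 0) * (∑ j ∈ s, shapleyValue d v j) := by
    intro s; ring
  rw [Finset.sum_congr rfl fun s _ => hsplit s, Finset.sum_sub_distrib,
    Finset.sum_sub_distrib]
  have hX : ∑ s : Finset (Fin d), (if i ∈ s then pSh d s else 0) * v s =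
      (shapleyValue d v i + Gv d v) / (2 * harm (d - 1)) := by
    have h := lemC hd v i
    rw [eq_div_iff (by positivity)]
    linarith
  have h2 : ∑ s : Finset (Fin d), (if i ∈ s then pSh d s else 0) * v ∅ =
      v ∅ / 2 := by
    rw [← Finset.sum_mul, alpha_sum hd i]
    ring
  have h3 : ∑ s : Finset (Fin d),
      (if i ∈ s then pSh d s else 0) * (∑ j ∈ s, shapleyValue d v j) =
        (1 / 2 - 1 / (2 * harm (d - 1))) * (v Finset.univ - v ∅) +
          shapleyValue d v i / (2 * harm (d - 1)) := by
    have ha : ∀ s : Finset (Fin d),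
        (if i ∈ s then pSh d s else 0) * (∑ j ∈ s, shapleyValue d v j) =
          ∑ j : Fin d, (if i ∈ s ∧ j ∈ s then pSh d s else 0) * shapleyValue d v j := by
      intro s
      have h1 : (∑ j ∈ s, shapleyValue d v j) =
          ∑ j : Fin d, (if j ∈ s then shapleyValue d v j else 0) := by
        rw [Finset.sum_ite_mem, Finset.univ_inter]
      rw [h1, Finset.mul_sum]
      refine Finset.sum_congr rfl fun j _ => ?_
      by_cases hi : i ∈ s <;> by_cases hj : j ∈ s <;> simp [hi, hj]
    rw [Finset.sum_congr rfl fun s _ => ha s, Finset.sum_comm]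
    have hb : ∀ j : Fin d,
        ∑ s : Finset (Fin d), (if i ∈ s ∧ j ∈ s then pSh d s else 0) * shapleyValue d v j =
          ((1 / 2 - 1 / (2 * harm (d - 1))) +
            (if i = j then 1 / (2 * harm (d - 1)) else 0)) * shapleyValue d v j := by
      intro j
      rw [← Finset.sum_mul, pair_sum hd i j]
    rw [Finset.sum_congr rfl fun j _ => hb j]
    have hc : ∀ j : Fin d,
        ((1 / 2 - 1 / (2 * harm (d - 1))) +
            (if i = j then 1 / (2 * harm (d - 1)) else 0)) * shapleyValue d v j =
          (1 / 2 - 1 / (2 * harm (d - 1))) * shapleyValue d v j +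
            (if i = j then 1 / (2 * harm (d - 1)) * shapleyValue d v j else 0) := by
      intro j
      by_cases h : i = j <;> simp [h] <;> ring
    rw [Finset.sum_congr rfl fun j _ => hc j, Finset.sum_add_distrib, ← Finset.mul_sum,
      shapley_eff hd v,
      Fintype.sum_ite_eq i (fun j => 1 / (2 * harm (d - 1)) * shapleyValue d v j)]
    ring
  rw [hX, h2, h3]
  ring

/-- Pointwise key identity. -/
lemma key (hd : 2 ≤ d) (v : Finset (Fin d) → ℝ) (φ : EuclideanSpace ℝ (Fin d))
    (hφ : ∑ j, φ j = v Finset.univ - v ∅) :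
    hLoss d v φ - hLoss d v (shapleyValue d v) =
      (∑ j, (φ j - shapleyValue d v j) ^ 2) / (2 * harm (d - 1)) := by
  set ψ : EuclideanSpace ℝ (Fin d) := shapleyValue d v with hψ
  set δ : Fin d → ℝ := fun j => φ j - ψ j with hδdef
  have hδ0 : ∑ j, δ j = 0 := by
    simp only [hδdef]
    rw [Finset.sum_sub_distrib, hφ, hψ, shapley_eff hd v, sub_self]
  have hsum : ∀ s : Finset (Fin d), (∑ j ∈ s, φ j) = (∑ j ∈ s, ψ j) + ∑ j ∈ s, δ j := by
    intro s
    rw [← Finset.sum_add_distrib]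
    refine Finset.sum_congr rfl fun j _ => by simp [hδdef]
  have hmid : ∑ s : Finset (Fin d),
      pSh d s * (v s - v ∅ - ∑ l ∈ s, ψ l) * (∑ l ∈ s, δ l) = 0 := by
    have ha : ∀ s : Finset (Fin d),
        pSh d s * (v s - v ∅ - ∑ l ∈ s, ψ l) * (∑ l ∈ s, δ l) =
          ∑ j : Fin d, ((if j ∈ s then pSh d s else 0) * (v s - v ∅ - ∑ l ∈ s, ψ l)) * δ j := by
      intro s
      have h1 : (∑ l ∈ s, δ l) = ∑ j : Fin d, (if j ∈ s then δ j else 0) := by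
        rw [Finset.sum_ite_mem, Finset.univ_inter]
      rw [h1, Finset.mul_sum]
      refine Finset.sum_congr rfl fun j _ => ?_
      by_cases hj : j ∈ s <;> simp [hj]
    rw [Finset.sum_congr rfl fun s _ => ha s, Finset.sum_comm]
    have hb : ∀ j : Fin d,
        ∑ s : Finset (Fin d),
            ((if j ∈ s then pSh d s else 0) * (v s - v ∅ - ∑ l ∈ s, ψ l)) * δ j =
          (Gv d v / (2 * harm (d - 1)) - v ∅ / 2 -
            (1 / 2 - 1 / (2 * harm (d - 1))) * (v Finset.univ - v ∅)) * δ j := by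
      intro j
      rw [← Finset.sum_mul, cross hd v j]
    rw [Finset.sum_congr rfl fun j _ => hb j, ← Finset.mul_sum, hδ0, mul_zero]
  have hexp : ∀ s : Finset (Fin d),
      pSh d s * (v s - v ∅ - ∑ l ∈ s, φ l) ^ 2 =
        pSh d s * (v s - v ∅ - ∑ l ∈ s, ψ l) ^ 2 +
          pSh d s * (∑ l ∈ s, δ l) ^ 2 -
          2 * (pSh d s * (v s - v ∅ - ∑ l ∈ s, ψ l) * (∑ l ∈ s, δ l)) := by
    intro s
    rw [hsum s]
    ring
  have hL1 : hLoss d v φ = hLoss d v ψ +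
      (∑ s : Finset (Fin d), pSh d s * (∑ l ∈ s, δ l) ^ 2) -
      2 * ∑ s : Finset (Fin d),
        pSh d s * (v s - v ∅ - ∑ l ∈ s, ψ l) * (∑ l ∈ s, δ l) := by
    rw [hLoss, Finset.sum_congr rfl fun s _ => hexp s, Finset.sum_sub_distrib,
      Finset.sum_add_distrib, ← Finset.mul_sum, hLoss]
  rw [hL1, hmid, quad hd δ hδ0]
  ring

end ShapAux

/-- For a family of games `V(ω)` and a measurable estimator `Φ(ω)` satisfying the
efficiency constraint almost everywhere, the expected estimation error satisfies
`E[‖Φ - φ(V)‖₂] ≤ √(2 H_{d-1} (L - L*))`. -/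
theorem expected_shapley_estimation_bound (d : ℕ) (hd : 2 ≤ d)
    {Ω : Type*} [MeasurableSpace Ω] (μ : Measure Ω) [IsProbabilityMeasure μ]
    (V : Ω → Finset (Fin d) → ℝ) (hV : ∀ s, Measurable fun ω => V ω s)
    (Φ : Ω → EuclideanSpace ℝ (Fin d)) (hΦ : Measurable Φ)
    (heff : ∀ᵐ ω ∂μ, ∑ i, Φ ω i = V ω Finset.univ - V ω ∅)
    (hL : Integrable (fun ω => hLoss d (V ω) (Φ ω)) μ)
    (hLstar : Integrable (fun ω => hLoss d (V ω) (shapleyValue d (V ω))) μ) :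
    ∫ ω, ‖Φ ω - shapleyValue d (V ω)‖ ∂μ ≤
      Real.sqrt (2 * harm (d - 1) *
        ((∫ ω, hLoss d (V ω) (Φ ω) ∂μ) -
          ∫ ω, hLoss d (V ω) (shapleyValue d (V ω)) ∂μ)) := by
  classical
  have hH : 0 < harm (d - 1) := ShapAux.harm_pos (by omega)
  set ψ : Ω → EuclideanSpace ℝ (Fin d) := fun ω => shapleyValue d (V ω) with hψ
  have hψmeas : Measurable ψ := by
    apply (WithLp.measurable_toLp 2 _).comp
    apply measurable_pi_lambda
    intro i
    apply Measurable.const_mul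
    apply Finset.measurable_sum
    intro s _
    exact ((hV (insert i s)).sub (hV s)).const_mul _
  set f : Ω → ℝ := fun ω => ∑ j, (Φ ω j - ψ ω j) ^ 2 with hf
  have hfmeas : Measurable f := by
    apply Finset.measurable_sum
    intro j _
    exact (((measurable_pi_apply j).comp ((WithLp.measurable_ofLp 2 _).comp hΦ)).sub
      ((measurable_pi_apply j).comp ((WithLp.measurable_ofLp 2 _).comp hψmeas))).pow_const 2
  have hf0 : ∀ ω, 0 ≤ f ω := fun ω => Finset.sum_nonneg fun j _ => sq_nonneg _
  have hnorm : ∀ ω, ‖Φ ω - ψ ω‖ = Real.sqrt (f ω) := by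
    intro ω
    rw [EuclideanSpace.norm_eq]
    congr 1
    refine Finset.sum_congr rfl fun j _ => ?_
    rw [show (Φ ω - ψ ω) j = Φ ω j - ψ ω j from rfl, Real.norm_eq_abs, sq_abs]
  have hkey : ∀ᵐ ω ∂μ, f ω =
      2 * harm (d - 1) * (hLoss d (V ω) (Φ ω) - hLoss d (V ω) (ψ ω)) := by
    filter_upwards [heff] with ω hω
    have h := ShapAux.key hd (V ω) (Φ ω) hω
    rw [h]
    field_simp
    rfl
  have hg_int : Integrable f μ := by
    refine Integrable.congr (((hL.sub hLstar).const_mul (2 * harm (d - 1)))) ?_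
    filter_upwards [hkey] with ω h
    exact h.symm
  have hint_eq : ∫ ω, f ω ∂μ = 2 * harm (d - 1) *
      ((∫ ω, hLoss d (V ω) (Φ ω) ∂μ) - ∫ ω, hLoss d (V ω) (ψ ω) ∂μ) := by
    rw [integral_congr_ae hkey, MeasureTheory.integral_const_mul, integral_sub hL hLstar]
  have hsqrtmeas : AEStronglyMeasurable (fun ω => Real.sqrt (f ω)) μ :=
    (Real.continuous_sqrt.measurable.comp hfmeas).aestronglyMeasurable
  have hmem2 : MemLp (fun ω => Real.sqrt (f ω)) 2 μ := by
    refine (memLp_two_iff_integrable_sq hsqrtmeas).mpr ?_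
    refine hg_int.congr ?_
    filter_upwards with ω
    rw [Real.sq_sqrt (hf0 ω)]
  have hpq : (2 : ℝ).HolderConjugate 2 := by
    exact Real.HolderConjugate.two_two
  have hof2 : ENNReal.ofReal (2 : ℝ) = 2 := by
    simp
  have hHolder := integral_mul_le_Lp_mul_Lq_of_nonneg hpq
    (f := fun ω => Real.sqrt (f ω)) (g := fun _ => (1 : ℝ))
    (Filter.Eventually.of_forall fun ω => Real.sqrt_nonneg _)
    (Filter.Eventually.of_forall fun _ => zero_le_one)
    (by rw [hof2]; exact hmem2)
    (by rw [hof2]; exact memLp_const 1)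
  have hint_nonneg : 0 ≤ ∫ ω, f ω ∂μ := integral_nonneg hf0
  calc ∫ ω, ‖Φ ω - ψ ω‖ ∂μ = ∫ ω, Real.sqrt (f ω) ∂μ := by
        exact integral_congr_ae (Filter.Eventually.of_forall fun ω => hnorm ω)
    _ = ∫ ω, Real.sqrt (f ω) * 1 ∂μ := by simp
    _ ≤ (∫ ω, Real.sqrt (f ω) ^ (2 : ℝ) ∂μ) ^ ((1 : ℝ) / 2) *
          (∫ _ω, (1 : ℝ) ^ (2 : ℝ) ∂μ) ^ ((1 : ℝ) / 2) := hHolder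
    _ = (∫ ω, f ω ∂μ) ^ ((1 : ℝ) / 2) := by
        have h1 : ∀ ω, Real.sqrt (f ω) ^ (2 : ℝ) = f ω := by
          intro ω
          rw [show (2 : ℝ) = ((2 : ℕ) : ℝ) by norm_num, Real.rpow_natCast,
            Real.sq_sqrt (hf0 ω)]
        rw [integral_congr_ae (Filter.Eventually.of_forall h1)]
        simp [integral_const]
    _ = Real.sqrt (∫ ω, f ω ∂μ) := by
        rw [Real.sqrt_eq_rpow]
    _ = Real.sqrt (2 * harm (d - 1) *
          ((∫ ω, hLoss d (V ω) (Φ ω) ∂μ) - ∫ ω, hLoss d (V ω) (ψ ω) ∂μ)) := by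
        rw [hint_eq]
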